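/- Let A be a noetherian ring and let a be a proper ideal of A such that Ass(A/a) = Min(A/a) (a is unmixed). If a = Q_1 ∩ ⋯ ∩ Q_d is an irredundant primary decomposition of a, then for every integer s ≥ 1 one has a^{(s)} = Q_1^{(s)} ∩ ⋯ ∩ Q_d^{(s)}. -/

import Mathlib

/- STATEMENT 1: Let A be a noetherian ring and a a proper ideal of A with
Ass(A/a) = Min(A/a) (a is unmixed). If a = Q_1 ∩ ⋯ ∩ Q_d is an irredundant primary
decomposition of a, then for every s ≥ 1 one has a^{(s)} = Q_1^{(s)} ∩ ⋯ ∩ Q_d^{(s)}. -/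

noncomputable section

/-- The `s`-th symbolic power of an ideal `a`: the intersection over all associated primes `P`
of `A ⧸ a` of the contraction of `a ^ s` extended to the localization at `P`. -/
def symbPow {A : Type*} [CommRing A] (a : Ideal A) (s : ℕ) : Ideal A :=
  sInf { J : Ideal A | ∃ (P : Ideal A) (hP : P ∈ associatedPrimes A (A ⧸ a)),
      haveI : P.IsPrime := IsAssociatedPrime.isPrime hP
      J = (Ideal.map (algebraMap A (Localization.AtPrime P)) (a ^ s)).comap
            (algebraMap A (Localization.AtPrime P)) }

section Aux

variable {A : Type*} [CommRing A]

lemma mem_locContraction_iff (P : Ideal A) [P.IsPrime] (I : Ideal A) (r : A) :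
    r ∈ (Ideal.map (algebraMap A (Localization.AtPrime P)) I).comap
        (algebraMap A (Localization.AtPrime P)) ↔ ∃ m ∉ P, r * m ∈ I := by
  rw [Ideal.mem_comap, IsLocalization.mem_map_algebraMap_iff P.primeCompl]
  constructor
  · rintro ⟨⟨⟨x, hx⟩, m⟩, h⟩
    rw [← map_mul] at h
    obtain ⟨c, hc⟩ := (IsLocalization.eq_iff_exists P.primeCompl _).mp h
    refine ⟨↑m * ↑c, fun hmc => (mul_mem m.2 c.2 : _ ∈ P.primeCompl) hmc, ?_⟩
    have h2 : r * (↑m * ↑c) = ↑c * (r * ↑m) := by ring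
    rw [h2, hc]
    exact I.mul_mem_left _ hx
  · rintro ⟨m, hm, hrm⟩
    exact ⟨⟨⟨r * m, hrm⟩, ⟨m, hm⟩⟩, (map_mul _ r m).symm⟩

lemma colon_radical {Q : Ideal A} (hQ : Q.IsPrimary) {x : A} (hx : x ∉ Q) :
    (Q.colon (Ideal.span {x})).radical = Q.radical := by
  have h1 : Q.colon (Ideal.span {x}) ≤ Q.radical := by
    intro r hr
    rw [Ideal.mem_colon_span_singleton] at hr
    rcases (Ideal.isPrimary_iff.mp hQ).2 (show x * r ∈ Q by rwa [mul_comm]) with h | h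
    · exact absurd h hx
    · exact h
  have h2 : Q ≤ Q.colon (Ideal.span {x}) := fun r hr =>
    Ideal.mem_colon_span_singleton.mpr (Q.mul_mem_right x hr)
  refine le_antisymm ?_ (Ideal.radical_mono h2)
  have h3 := Ideal.radical_mono h1
  rwa [Ideal.radical_idem] at h3

lemma colon_isPrimary {Q : Ideal A} (hQ : Q.IsPrimary) {x : A} (hx : x ∉ Q) :
    (Q.colon (Ideal.span {x})).IsPrimary := by
  rw [Ideal.isPrimary_iff]
  constructor
  · intro h
    apply hx
    have h1 : (1 : A) ∈ Q.colon (Ideal.span {x}) := by rw [h]; trivial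
    simpa using Ideal.mem_colon_span_singleton.mp h1
  · intro y z hyz
    rw [Ideal.mem_colon_span_singleton] at hyz
    rcases (Ideal.isPrimary_iff.mp hQ).2 (show (y * x) * z ∈ Q by
        have h : y * z * x = y * x * z := by ring
        rwa [h] at hyz) with h | h
    · exact Or.inl (Ideal.mem_colon_span_singleton.mpr h)
    · right
      rwa [colon_radical hQ hx]

lemma radical_colon_mem_associatedPrimes [IsNoetherianRing A] (a : Ideal A) (x : A)
    (hprim : (a.colon (Ideal.span {x})).IsPrimary) :
    (a.colon (Ideal.span {x})).radical ∈ associatedPrimes A (A ⧸ a) := by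
  set I := a.colon (Ideal.span {x}) with hI
  have hsing := associatedPrimes.eq_singleton_of_isPrimary hprim
  have hmem : I.radical ∈ associatedPrimes A (A ⧸ I) := by rw [hsing]; rfl
  let g : A →ₗ[A] A ⧸ a :=
    (Ideal.Quotient.mkₐ A a).toLinearMap.comp (LinearMap.mulRight A x)
  have hker : LinearMap.ker g = (I : Submodule A A) := by
    ext r
    simp only [LinearMap.mem_ker, g, LinearMap.comp_apply, LinearMap.mulRight_apply,
      AlgHom.toLinearMap_apply, Ideal.Quotient.mkₐ_eq_mk, Ideal.Quotient.eq_zero_iff_mem]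
    exact (Ideal.mem_colon_span_singleton).symm
  have hinj : Function.Injective ((I : Submodule A A).liftQ g hker.ge) := by
    rw [← LinearMap.ker_eq_bot]
    exact Submodule.ker_liftQ_eq_bot _ _ _ hker.le
  exact associatedPrimes.subset_of_injective hinj hmem

end Aux

theorem symbPow_of_unmixed_primary_decomposition
    {A : Type*} [CommRing A] [IsNoetherianRing A] (a : Ideal A) (ha : a ≠ ⊤)
    (hunmixed : associatedPrimes A (A ⧸ a) = a.minimalPrimes)
    (d : ℕ) (Q : Fin d → Ideal A) (hprimary : ∀ i, (Q i).IsPrimary)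
    (hdecomp : a = ⨅ i, Q i)
    (hirr₁ : ∀ i : Fin d, a ≠ ⨅ j ∈ ({j | j ≠ i} : Set (Fin d)), Q j)
    (hirr₂ : ∀ i j : Fin d, i ≠ j → (Q i).radical ≠ (Q j).radical)
    (s : ℕ) (hs : 1 ≤ s) :
    symbPow a s = ⨅ i, symbPow (Q i) s := by
  classical
  set P : Fin d → Ideal A := fun i => (Q i).radical with hPdef
  have hPprime : ∀ i, (P i).IsPrime := fun i => Ideal.isPrime_radical (hprimary i)
  have haleQ : ∀ i, a ≤ Q i := fun i => hdecomp ▸ iInf_le Q i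
  -- each P i is an associated prime of A ⧸ a
  have hPass : ∀ i, P i ∈ associatedPrimes A (A ⧸ a) := by
    intro i
    have hlt : a < ⨅ j ∈ ({j | j ≠ i} : Set (Fin d)), Q j :=
      lt_of_le_of_ne (le_iInf₂ fun j _ => haleQ j) (hirr₁ i)
    obtain ⟨x, hx1, hx2⟩ := SetLike.exists_of_lt hlt
    have hxQ : ∀ j, j ≠ i → x ∈ Q j := fun j hj =>
      Submodule.mem_iInf _ |>.mp (Submodule.mem_iInf _ |>.mp hx1 j) hj
    have hxQi : x ∉ Q i := by
      intro h
      apply hx2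
      rw [hdecomp]
      refine Submodule.mem_iInf _ |>.mpr fun j => ?_
      by_cases hj : j = i
      · exact hj ▸ h
      · exact hxQ j hj
    have hcolon : a.colon (Ideal.span {x}) = (Q i).colon (Ideal.span {x}) := by
      ext r
      simp only [Ideal.mem_colon_span_singleton]
      constructor
      · exact fun h => haleQ i h
      · intro h
        rw [hdecomp]
        refine Submodule.mem_iInf _ |>.mpr fun j => ?_
        by_cases hj : j = i
        · exact hj ▸ h
        · exact (Q j).mul_mem_left r (hxQ j hj)
    have hprim : (a.colon (Ideal.span {x})).IsPrimary := by
      rw [hcolon]; exact colon_isPrimary (hprimary i) hxQi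
    have hm := radical_colon_mem_associatedPrimes a x hprim
    rwa [hcolon, colon_radical (hprimary i) hxQi] at hm
  -- Ass(A ⧸ a) = range P
  have hAss : associatedPrimes A (A ⧸ a) = Set.range P := by
    apply Set.Subset.antisymm
    · rw [hunmixed]
      rintro p ⟨⟨hpprime, hap⟩, hmin⟩
      have hinf : Finset.univ.inf Q ≤ p := by
        have h1 : Finset.univ.inf Q = ⨅ i, Q i := by
          rw [Finset.inf_eq_iInf]; simp
        rw [h1, ← hdecomp]; exact hap
      obtain ⟨i, -, hi⟩ := hpprime.inf_le'.mp hinf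
      have hPle : P i ≤ p := hpprime.radical_le_iff.mpr hi
      have hple : p ≤ P i := hmin ⟨hPprime i, (haleQ i).trans Ideal.le_radical⟩ hPle
      exact ⟨i, le_antisymm hPle hple⟩
    · rintro _ ⟨i, rfl⟩; exact hPass i
  -- key localization computation
  have hkey : ∀ i : Fin d,
      haveI := hPprime i
      (Ideal.map (algebraMap A (Localization.AtPrime (P i))) (a ^ s)).comap
          (algebraMap A (Localization.AtPrime (P i)))
        = (Ideal.map (algebraMap A (Localization.AtPrime (P i))) ((Q i) ^ s)).comap
            (algebraMap A (Localization.AtPrime (P i))) := by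
    intro i
    haveI := hPprime i
    ext r
    rw [mem_locContraction_iff, mem_locContraction_iff]
    constructor
    · rintro ⟨m, hm, hrm⟩
      exact ⟨m, hm, Ideal.pow_right_mono (haleQ i) s hrm⟩
    · rintro ⟨m, hm, hrm⟩
      have hchoice : ∀ j : Fin d, ∃ t, (j ≠ i → t ∈ Q j) ∧ t ∉ P i := by
        intro j
        by_cases hj : j = i
        · refine ⟨1, fun h => absurd hj h, fun h => (hPprime i).ne_top ?_⟩
          rwa [Ideal.eq_top_iff_one]
        · have hQnle : ¬ Q j ≤ P i := by
            intro hQle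
            have hrad : P j ≤ P i := by
              have h := Ideal.radical_mono hQle
              rwa [(hPprime i).radical] at h
            have hPimin : P i ∈ a.minimalPrimes := by rw [← hunmixed]; exact hPass i
            have hle2 : P i ≤ P j :=
              hPimin.2 ⟨hPprime j, (haleQ j).trans Ideal.le_radical⟩ hrad
            exact hirr₂ j i hj (le_antisymm hrad hle2)
          obtain ⟨t, htQ, htP⟩ := SetLike.not_le_iff_exists.mp hQnle
          exact ⟨t, fun _ => htQ, htP⟩
      choose t ht1 ht2 using hchoice
      set u : A := ∏ j ∈ Finset.univ.erase i, t j with hu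
      have hu1 : ∀ j, j ≠ i → u ∈ Q j := by
        intro j hj
        have hmemj : j ∈ Finset.univ.erase i := Finset.mem_erase.mpr ⟨hj, Finset.mem_univ j⟩
        rw [hu, ← Finset.mul_prod_erase _ t hmemj]
        exact Ideal.mul_mem_right _ _ (ht1 j hj)
      have hu2 : u ∉ P i := by
        intro hmem
        obtain ⟨j, -, hjP⟩ := (Ideal.IsPrime.prod_mem_iff).mp hmem
        exact ht2 j hjP
      refine ⟨m * u ^ s, ?_, ?_⟩
      · intro hmem
        rcases (hPprime i).mem_or_mem hmem with h | h
        · exact hm h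
        · exact hu2 ((hPprime i).mem_of_pow_mem s h)
      · have hQu : Q i * Ideal.span {u} ≤ a := by
          rw [Ideal.mul_le]
          intro ri hri rj hrj
          rw [hdecomp]
          refine Submodule.mem_iInf _ |>.mpr fun j => ?_
          by_cases hj : j = i
          · exact hj ▸ Ideal.mul_mem_right rj _ hri
          · exact Ideal.mul_mem_left _ ri ((Ideal.span_singleton_le_iff_mem _).mpr (hu1 j hj) hrj)
        have hps : (Q i) ^ s * Ideal.span {u} ^ s ≤ a ^ s := by
          rw [← mul_pow]; exact Ideal.pow_right_mono hQu s
        have heq : r * (m * u ^ s) = r * m * u ^ s := by ring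
        rw [heq]
        exact hps (Ideal.mul_mem_mul hrm (Ideal.pow_mem_pow (Ideal.mem_span_singleton_self u) s))
  -- assemble
  have hsa : symbPow a s = ⨅ i,
      haveI := hPprime i
      (Ideal.map (algebraMap A (Localization.AtPrime (P i))) (a ^ s)).comap
        (algebraMap A (Localization.AtPrime (P i))) := by
    unfold symbPow
    apply le_antisymm
    · exact le_iInf fun i => sInf_le ⟨P i, hAss ▸ Set.mem_range_self i, rfl⟩
    · refine le_sInf ?_
      rintro J ⟨p, hp, rfl⟩
      rw [hAss] at hp
      obtain ⟨i, rfl⟩ := hp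
      exact iInf_le _ i
  have hsQ : ∀ i, symbPow (Q i) s =
      haveI := hPprime i
      (Ideal.map (algebraMap A (Localization.AtPrime (P i))) ((Q i) ^ s)).comap
        (algebraMap A (Localization.AtPrime (P i))) := by
    intro i
    haveI := hPprime i
    have hAssQ : associatedPrimes A (A ⧸ (Q i)) = {P i} :=
      associatedPrimes.eq_singleton_of_isPrimary (hprimary i)
    unfold symbPow
    apply le_antisymm
    · exact sInf_le ⟨P i, by rw [hAssQ]; rfl, rfl⟩
    · refine le_sInf ?_
      rintro J ⟨p, hp, rfl⟩
      rw [hAssQ] at hp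
      obtain rfl : p = P i := hp
      exact le_refl _
  rw [hsa]
  exact iInf_congr fun i => (hkey i).trans (hsQ i).symm

end
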